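/- The number of sequences (a_1,...,a_n) of natural numbers satisfying a_1 ≤ a_2 ≤ ... ≤ a_n and a_i ≤ m(i-1) for all 1 ≤ i ≤ n equals the Fuss–Catalan number (1/(mn+1)) * binomial((m+1)n, n). -/

import Mathlib

open scoped Classical
open Fin.NatCast

/-- An `m`-Dyck sequence of height `n` (0-indexed): weakly increasing with `a i ≤ m * i`. -/
def IsDyck (m n : ℕ) (a : Fin n → ℕ) : Prop :=
  Monotone a ∧ ∀ i : Fin n, a i ≤ m * i.val

/-- `k` is the last index of the primitive subsequence of `a` at position `i`. -/
def IsPrimEnd (m n : ℕ) (a : Fin n → ℕ) (i k : Fin n) : Prop :=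
  i ≤ k ∧ (∀ j : Fin n, i < j → j ≤ k → a j - a i < m * (j.val - i.val)) ∧
    (k.val + 1 = n ∨ ∃ h : k.val + 1 < n, m * (k.val + 1 - i.val) ≤ a ⟨k.val + 1, h⟩ - a i)

/-- The covering relation of the `m`-Tamari lattice: decrease the primitive
subsequence at a position `i+1` with `a i < a (i+1)` by one. -/
def Covers (m n : ℕ) (a b : Fin n → ℕ) : Prop :=
  ∃ (i : ℕ) (h : i + 1 < n) (k : Fin n),
    a ⟨i, Nat.lt_of_succ_lt h⟩ < a ⟨i + 1, h⟩ ∧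
    IsPrimEnd m n a ⟨i + 1, h⟩ k ∧
    b = fun j => if (⟨i + 1, h⟩ : Fin n) ≤ j ∧ j ≤ k then a j - 1 else a j

/-- The order of the `m`-Tamari lattice: reflexive-transitive closure of `Covers`. -/
def TamariLE (m n : ℕ) (a b : Fin n → ℕ) : Prop :=
  Relation.ReflTransGen (Covers m n) a b

/-- The number of `m`-Dyck sequences of height `n` is the Fuss–Catalan number
`(1/(mn+1)) * C((m+1)n, n)`, stated multiplicatively. -/
private lemma cycle_no_two (L : ℕ) (U : ℕ → ℤ) (hU : ∀ k, U (k + L) = U k - 1)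
    {x y : ℕ} (hx : x < L) (hy : y < L) (hxy : x < y)
    (gx : ∀ j, 1 ≤ j → j < L → U x ≤ U (x + j))
    (gy : ∀ j, 1 ≤ j → j < L → U y ≤ U (y + j)) : False := by
  have h1 : U x ≤ U y := by
    have := gx (y - x) (by omega) (by omega)
    rwa [show x + (y - x) = y by omega] at this
  have h2 : U y ≤ U (x + L) := by
    have := gy (x + L - y) (by omega) (by omega)
    rwa [show y + (x + L - y) = x + L by omega] at this
  rw [hU x] at h2
  linarith

private lemma cycle_lemma (L : ℕ) (hL : 0 < L) (U : ℕ → ℤ)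
    (hU : ∀ k, U (k + L) = U k - 1) :
    ∃! d : ℕ, d < L ∧ ∀ j, 1 ≤ j → j < L → U d ≤ U (d + j) := by
  have hP : ∃ d, d < L ∧ ∀ j < L, U d ≤ U j := by
    obtain ⟨e, he, hmin⟩ := Finset.exists_min_image (Finset.range L) U
      ⟨0, Finset.mem_range.mpr hL⟩
    exact ⟨e, Finset.mem_range.mp he, fun j hj => hmin j (Finset.mem_range.mpr hj)⟩
  set d := Nat.find hP with hddef
  obtain ⟨hdL, hdmin⟩ := Nat.find_spec hP
  have hstrict : ∀ e, e < d → U d + 1 ≤ U e := by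
    intro e he
    have heL : e < L := lt_trans he hdL
    have hne : ¬(e < L ∧ ∀ j < L, U e ≤ U j) := Nat.find_min hP he
    have hge : U d ≤ U e := hdmin e heL
    by_contra hcon
    push_neg at hcon
    have heq : U e = U d := by linarith
    exact hne ⟨heL, fun j hj => heq ▸ hdmin j hj⟩
  have hgood : ∀ j, 1 ≤ j → j < L → U d ≤ U (d + j) := by
    intro j hj1 hjL
    by_cases h : d + j < L
    · exact hdmin _ h
    · have hk : d + j - L < d := by omega
      have : U (d + j) = U (d + j - L) - 1 := by
        conv_lhs => rw [show d + j = (d + j - L) + L by omega]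
        exact hU _
      have := hstrict _ hk
      linarith
  refine ⟨d, ⟨hdL, hgood⟩, ?_⟩
  rintro d' ⟨hd'L, hgood'⟩
  rcases lt_trichotomy d' d with h | h | h
  · exact absurd (cycle_no_two L U hU hd'L hdL h hgood' hgood) not_false
  · exact h
  · exact absurd (cycle_no_two L U hU hdL hd'L h hgood hgood') not_false

private lemma window_sum {m n : ℕ} (A : Multiset (Fin (m*n+1))) (k : ℕ) :
    ∑ v ∈ Finset.range (m*n+1), A.count (((k+v : ℕ) : Fin (m*n+1))) = Multiset.card A := by
  have huniv : ∑ x : Fin (m*n+1), A.count x = Multiset.card A := by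
    rw [← Multiset.toFinset_sum_count_eq A]
    exact (Finset.sum_subset (Finset.subset_univ _)
      (fun x _ hx => Multiset.count_eq_zero_of_notMem
        (fun h => hx (Multiset.mem_toFinset.mpr h)))).symm
  rw [← huniv]
  apply Finset.sum_nbij' (i := fun v : ℕ => ((k+v : ℕ) : Fin (m*n+1)))
    (j := fun x : Fin (m*n+1) => (x - ((k:ℕ) : Fin (m*n+1))).val)
  · intro a _; exact Finset.mem_univ _
  · intro x _; exact Finset.mem_range.mpr (Fin.is_lt _)
  · intro v hv
    have hvlt : v < m*n+1 := Finset.mem_range.mp hv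
    push_cast
    rw [add_sub_cancel_left, Fin.val_cast_of_lt hvlt]
  · intro x _
    push_cast
    rw [add_sub_cancel]
  · intro v _; rfl

private def Nle (m n : ℕ) (A : Multiset (Fin (m*n+1))) (t : ℕ) : ℕ :=
  ∑ v ∈ Finset.range (t+1), A.count ((v : ℕ) : Fin (m*n+1))

private def DyckM (m n : ℕ) (A : Multiset (Fin (m*n+1))) : Prop :=
  ∀ t, t < m*n → t + 1 ≤ m * Nle m n A t

private def SS (m n : ℕ) (B : Multiset (Fin (m*n+1))) (k : ℕ) : ℕ :=
  ∑ v ∈ Finset.range k, B.count ((v : ℕ) : Fin (m*n+1))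

private def UU (m n : ℕ) (B : Multiset (Fin (m*n+1))) (k : ℕ) : ℤ :=
  (m : ℤ) * SS m n B k - k

private lemma SS_mono {m n : ℕ} (B : Multiset (Fin (m*n+1))) {k k' : ℕ} (h : k ≤ k') :
    SS m n B k ≤ SS m n B k' :=
  Finset.sum_le_sum_of_subset (Finset.range_subset_range.mpr h)

private lemma SS_add_period {m n : ℕ} (B : Multiset (Fin (m*n+1))) (hB : Multiset.card B = n)
    (k : ℕ) : SS m n B (k + (m*n+1)) = SS m n B k + n := by
  have h2 : ∑ v ∈ Finset.Ico k (k + (m*n+1)), B.count ((v : ℕ) : Fin (m*n+1)) = n := by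
    rw [Finset.sum_Ico_eq_sum_range, show k + (m*n+1) - k = m*n+1 by omega]
    rw [window_sum B k] at *
    exact hB
  unfold SS
  simp only [Finset.range_eq_Ico]
  rw [← Finset.sum_Ico_consecutive _ (Nat.zero_le k) (Nat.le_add_right _ _), h2]

private lemma UU_period {m n : ℕ} (B : Multiset (Fin (m*n+1))) (hB : Multiset.card B = n)
    (k : ℕ) : UU m n B (k + (m*n+1)) = UU m n B k - 1 := by
  unfold UU
  rw [SS_add_period B hB k]
  push_cast
  ring

private lemma Nle_map_shift {m n : ℕ} (B : Multiset (Fin (m*n+1))) (c : Fin (m*n+1)) (t : ℕ) :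
    Nle m n (B.map (· + c)) t = SS m n B ((-c).val + (t+1)) - SS m n B ((-c).val) := by
  have hcount : ∀ x : Fin (m*n+1), (B.map (· + c)).count x = B.count (x - c) := by
    intro x
    have h := Multiset.count_map_eq_count' (fun a => a + c) B
      (fun a b hab => by simpa using hab) (x - c)
    rw [show x - c + c = x from sub_add_cancel x c] at h
    exact h
  have key : ∀ v : ℕ, ((v : Fin (m*n+1)) - c) = (((-c).val + v : ℕ) : Fin (m*n+1)) := by
    intro v
    push_cast
    exact sub_eq_neg_add _ _
  unfold Nle
  rw [Finset.sum_congr rfl (fun v _ => by rw [hcount, key])]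
  have h2 : SS m n B ((-c).val + (t+1)) - SS m n B ((-c).val)
      = ∑ v ∈ Finset.Ico ((-c).val) ((-c).val + (t+1)), B.count ((v : ℕ) : Fin (m*n+1)) := by
    unfold SS
    simp only [Finset.range_eq_Ico]
    rw [← Finset.sum_Ico_consecutive _ (Nat.zero_le ((-c).val)) (Nat.le_add_right _ _)]
    omega
  rw [h2, Finset.sum_Ico_eq_sum_range, show (-c).val + (t+1) - (-c).val = t+1 by omega]

private lemma dyckM_shift_iff {m n : ℕ} (B : Multiset (Fin (m*n+1))) (c : Fin (m*n+1)) :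
    DyckM m n (B.map (· + c)) ↔
      ∀ j, 1 ≤ j → j < m*n+1 → UU m n B ((-c).val) ≤ UU m n B ((-c).val + j) := by
  constructor
  · intro hD j hj1 hjL
    have hD' := hD (j-1) (by omega)
    rw [Nle_map_shift, show (j-1)+1 = j by omega] at hD'
    have hmono' := SS_mono B (Nat.le_add_right ((-c).val) j)
    unfold UU
    zify [hmono'] at hD'
    push_cast
    linarith
  · intro hU t ht
    have h := hU (t+1) (by omega) (by omega)
    unfold UU at h
    rw [Nle_map_shift]
    have hmono' := SS_mono B (Nat.le_add_right ((-c).val) (t+1))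
    zify [hmono']
    push_cast at h
    linarith

private lemma exists_unique_shift {m n : ℕ} (B : Multiset (Fin (m*n+1)))
    (hB : Multiset.card B = n) :
    ∃! c : Fin (m*n+1), DyckM m n (B.map (· + c)) := by
  obtain ⟨d, ⟨hdL, hdgood⟩, hduniq⟩ :=
    cycle_lemma (m*n+1) (Nat.succ_pos _) (UU m n B) (UU_period B hB)
  refine ⟨-(⟨d, hdL⟩ : Fin (m*n+1)), ?_, ?_⟩
  · show DyckM m n (B.map (· + (-(⟨d, hdL⟩ : Fin (m*n+1)))))
    rw [dyckM_shift_iff, neg_neg]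
    exact hdgood
  · intro c' hc'
    rw [dyckM_shift_iff] at hc'
    have hval : (-c').val = d := hduniq ((-c').val) ⟨Fin.is_lt _, hc'⟩
    have : -c' = (⟨d, hdL⟩ : Fin (m*n+1)) := Fin.ext hval
    rw [← this, neg_neg]

private lemma card_shift (m n : ℕ) :
    Nat.card {A : Multiset (Fin (m*n+1)) // Multiset.card A = n} =
      (m*n+1) * Nat.card {A : Multiset (Fin (m*n+1)) // Multiset.card A = n ∧ DyckM m n A} := by
  classical
  set T := {A : Multiset (Fin (m*n+1)) // Multiset.card A = n ∧ DyckM m n A}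
  have hb : Function.Bijective (fun p : Fin (m*n+1) × T =>
      (⟨p.2.1.map (· + p.1), by rw [Multiset.card_map]; exact p.2.2.1⟩ :
        {A : Multiset (Fin (m*n+1)) // Multiset.card A = n})) := by
    constructor
    · rintro ⟨c, A, hA, hD⟩ ⟨c', A', hA', hD'⟩ h
      simp only [Subtype.mk_eq_mk] at h
      have hC : Multiset.card (A.map (· + c)) = n := by rw [Multiset.card_map]; exact hA
      have hback : ∀ (X : Multiset (Fin (m*n+1))) (e : Fin (m*n+1)),
          (X.map (· + e)).map (· + (-e)) = X := by
        intro X e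
        rw [Multiset.map_map]
        simp [Function.comp]
      have h1 : DyckM m n ((A.map (· + c)).map (· + (-c))) := by rw [hback]; exact hD
      have h2 : DyckM m n ((A.map (· + c)).map (· + (-c'))) := by rw [h, hback]; exact hD'
      obtain ⟨c₀, _, huniq⟩ := exists_unique_shift (A.map (· + c)) hC
      have hcc : -c = -c' := (huniq _ h1).trans (huniq _ h2).symm
      have hcc' : c = c' := neg_injective hcc
      subst hcc'
      have hAA : A = A' := by
        have := congrArg (fun X => X.map (· + (-c))) h
        simpa [hback] using this
      simp [hAA]
    · rintro ⟨C, hC⟩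
      obtain ⟨c₀, hc₀, _⟩ := exists_unique_shift C hC
      refine ⟨⟨-c₀, ⟨C.map (· + c₀), by rw [Multiset.card_map]; exact hC, hc₀⟩⟩, ?_⟩
      apply Subtype.ext
      simp only [Multiset.map_map]
      simp [Function.comp]
  rw [← Nat.card_eq_of_bijective _ hb, Nat.card_prod]
  congr 1
  simp

private def toM (m n : ℕ) (a : Fin n → ℕ) : Multiset (Fin (m*n+1)) :=
  Finset.univ.val.map (fun i : Fin n => ((a i : ℕ) : Fin (m*n+1)))

private lemma toM_card (m n : ℕ) (a : Fin n → ℕ) : Multiset.card (toM m n a) = n := by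
  simp [toM]

private lemma Nle_toM {m n : ℕ} (a : Fin n → ℕ) (ha : ∀ i, a i < m*n+1) {t : ℕ}
    (ht : t < m*n+1) :
    Nle m n (toM m n a) t = (Finset.univ.filter (fun i => a i ≤ t)).card := by
  classical
  rw [Finset.card_eq_sum_card_fiberwise (f := fun i => a i) (t := Finset.range (t+1))
    (fun i hi => Finset.mem_range.mpr (Nat.lt_succ_of_le (Finset.mem_filter.mp hi).2))]
  unfold Nle toM
  apply Finset.sum_congr rfl
  intro v hv
  have hvt : v ≤ t := by have := Finset.mem_range.mp hv; omega
  rw [Multiset.count_map]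
  have hset : (Finset.univ.filter (fun i => a i ≤ t)).filter (fun i => a i = v)
      = Finset.univ.filter (fun i : Fin n => ((v : ℕ) : Fin (m*n+1)) = ((a i : ℕ) : Fin (m*n+1))) := by
    rw [Finset.filter_filter]
    apply Finset.filter_congr
    intro i _
    constructor
    · rintro ⟨h1, h2⟩
      rw [h2]
    · intro h
      have hv' : v < m*n+1 := by omega
      have := congrArg Fin.val h
      rw [Fin.val_cast_of_lt hv', Fin.val_cast_of_lt (ha i)] at this
      omega
  rw [hset]
  rfl

private lemma monotone_count_iff {n t : ℕ} (a : Fin n → ℕ) (hmono : Monotone a) (i : Fin n) :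
    (i : ℕ) < (Finset.univ.filter (fun j => a j ≤ t)).card ↔ a i ≤ t := by
  classical
  constructor
  · intro h
    by_contra hcon
    push_neg at hcon
    have hsub : Finset.univ.filter (fun j => a j ≤ t) ⊆ Finset.Iio i := by
      intro j hj
      have hj' := (Finset.mem_filter.mp hj).2
      rw [Finset.mem_Iio]
      by_contra hji
      push_neg at hji
      exact absurd (le_trans (hmono hji) hj') (by omega)
    have := Finset.card_le_card hsub
    rw [Fin.card_Iio] at this
    omega
  · intro h
    have hsub : Finset.Iic i ⊆ Finset.univ.filter (fun j => a j ≤ t) := by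
      intro j hj
      exact Finset.mem_filter.mpr ⟨Finset.mem_univ _,
        le_trans (hmono (Finset.mem_Iic.mp hj)) h⟩
    have := Finset.card_le_card hsub
    rw [Fin.card_Iic] at this
    omega

private lemma dyck_bound {m n : ℕ} {a : Fin n → ℕ} (h : ∀ i : Fin n, a i ≤ m * i.val) :
    ∀ i, a i < m*n+1 := by
  intro i
  have h1 := h i
  have h2 : m * i.val ≤ m * n := mul_le_mul_right (le_of_lt i.isLt) m
  omega

private lemma isDyck_iff_dyckM {m n : ℕ} (hm : 0 < m) (a : Fin n → ℕ)
    (hmono : Monotone a) (ha : ∀ i, a i < m*n+1) :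
    (∀ i : Fin n, a i ≤ m * i.val) ↔ DyckM m n (toM m n a) := by
  constructor
  · intro hbd t ht
    have hq : t / m < n := by
      rcases Nat.lt_or_ge (t / m) n with h | h
      · exact h
      · exfalso
        have := Nat.div_add_mod t m
        have h2 : m * n ≤ m * (t / m) := mul_le_mul_right h m
        omega
    set i : Fin n := ⟨t / m, hq⟩ with hi
    have hdm := Nat.div_add_mod t m
    have hmm := Nat.mod_lt t hm
    have hai : a i ≤ t := le_trans (hbd i) (by simp only [hi]; omega)
    have hcount : (i : ℕ) < (Finset.univ.filter (fun j => a j ≤ t)).card :=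
      (monotone_count_iff a hmono i).mpr hai
    rw [Nle_toM a ha (by omega)]
    have h2 : m * (t / m + 1) ≤ m * (Finset.univ.filter (fun j => a j ≤ t)).card :=
      mul_le_mul_right hcount m
    have h3 : m * (t / m + 1) = m * (t / m) + m := by ring
    omega
  · intro hD i
    have hlt : m * i.val < m * n := by
      have h1 : m * (i.val + 1) ≤ m * n := mul_le_mul_right i.isLt m
      have h2 : m * (i.val + 1) = m * i.val + m := by ring
      omega
    have h := hD (m * i.val) hlt
    rw [Nle_toM a ha (by omega)] at h
    have := (monotone_count_iff (t := m * i.val) a hmono i)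
    rw [← this]
    by_contra hcon
    push_neg at hcon
    have h4 : m * (Finset.univ.filter (fun j => a j ≤ m * i.val)).card ≤ m * i.val :=
      mul_le_mul_right hcon m
    omega

private lemma card_dyck_eq {m n : ℕ} (hm : 0 < m) :
    Nat.card {a : Fin n → ℕ // IsDyck m n a} =
      Nat.card {A : Multiset (Fin (m*n+1)) // Multiset.card A = n ∧ DyckM m n A} := by
  classical
  apply Nat.card_eq_of_bijective
    (f := fun a : {a : Fin n → ℕ // IsDyck m n a} =>
      (⟨toM m n a.1, toM_card m n a.1,
        (isDyck_iff_dyckM hm a.1 a.2.1 (dyck_bound a.2.2)).mp a.2.2⟩ :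
        {A : Multiset (Fin (m*n+1)) // Multiset.card A = n ∧ DyckM m n A}))
  constructor
  · rintro ⟨a, hmo, hbd⟩ ⟨a', hmo', hbd'⟩ h
    simp only [Subtype.mk_eq_mk] at h
    have key : ∀ (b : Fin n → ℕ), Monotone b → (∀ i : Fin n, b i ≤ m * i.val) →
        Monotone (fun i => ((b i : ℕ) : Fin (m*n+1))) := by
      intro b hb hbb i j hij
      rw [Fin.le_def, Fin.val_cast_of_lt (dyck_bound hbb i), Fin.val_cast_of_lt (dyck_bound hbb j)]
      exact hb hij
    have hperm : List.Perm (List.ofFn (fun i => ((a i : ℕ) : Fin (m*n+1)))) (List.ofFn (fun i => ((a' i : ℕ) : Fin (m*n+1)))) := by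
      apply Multiset.coe_eq_coe.mp
      rw [← Fin.univ_val_map, ← Fin.univ_val_map]
      exact h
    have heq := List.Perm.eq_of_sortedLE
      (List.sortedLE_ofFn_iff.mpr (key a hmo hbd))
      (List.sortedLE_ofFn_iff.mpr (key a' hmo' hbd')) hperm
    have heq2 := List.ofFn_injective heq
    apply Subtype.ext
    funext i
    have := congrFun heq2 i
    have h1 := congrArg Fin.val this
    rwa [Fin.val_cast_of_lt (dyck_bound hbd i), Fin.val_cast_of_lt (dyck_bound hbd' i)] at h1
  · rintro ⟨A, hAcard, hAD⟩
    set l := Multiset.sort A (· ≤ ·) with hl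
    have hsort : l.Pairwise (· ≤ ·) := Multiset.pairwise_sort _ _
    have hlen : l.length = n := by rw [hl, Multiset.length_sort, hAcard]
    set a : Fin n → ℕ := fun i => (l.get (Fin.cast hlen.symm i)).val with hadef
    have hmono : Monotone a := by
      intro i j hij
      have h' : (Fin.cast hlen.symm i) ≤ (Fin.cast hlen.symm j) := hij
      exact hsort.rel_get_of_le h'
    have ha : ∀ i, a i < m*n+1 := fun i => Fin.is_lt _
    have htoM : toM m n a = A := by
      unfold toM
      rw [Fin.univ_val_map]
      have : List.ofFn (fun i : Fin n => ((a i : ℕ) : Fin (m*n+1))) = l := by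
        apply List.ext_get (by simp [hlen])
        intro idx h1 h2
        rw [List.get_ofFn]
        exact Fin.cast_val_eq_self _
      rw [this, hl, Multiset.sort_eq]
    have hD : DyckM m n (toM m n a) := by rw [htoM]; exact hAD
    have hbd : ∀ i : Fin n, a i ≤ m * i.val := (isDyck_iff_dyckM hm a hmono ha).mpr hD
    exact ⟨⟨a, hmono, hbd⟩, Subtype.ext htoM⟩

theorem dyck_count_fussCatalan (m n : ℕ) (hm : 0 < m) (hn : 0 < n) :
    (m * n + 1) * Nat.card {a : Fin n → ℕ // IsDyck m n a} =
      Nat.choose ((m + 1) * n) n := by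
  classical
  have h1 := card_dyck_eq (m := m) (n := n) hm
  have h2 := card_shift m n
  have h3 : Nat.card {A : Multiset (Fin (m*n+1)) // Multiset.card A = n} = ((m+1)*n).choose n := by
    have e : Sym (Fin (m*n+1)) n ≃ {A : Multiset (Fin (m*n+1)) // Multiset.card A = n} :=
      Equiv.refl _
    rw [← Nat.card_congr e, Nat.card_eq_fintype_card, Sym.card_sym_eq_choose, Fintype.card_fin]
    have h4 : m*n+1 + n - 1 = m*n+n := by omega
    have h5 : (m+1)*n = m*n+n := by ring
    rw [h4, h5]
  rw [h1, ← h2, h3]
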